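/- Let $f : A \to B$, $g : B \to C$, $h : C \to D$ be $R$-linear maps. Then there is an exact sequence $0 \to \ker(gf)/\ker f \to \ker(hgf)/\ker f \to \ker(hg)/\ker g$, where the first map is induced by the identity on $A$ and the second by $f$. More precisely: the map $\ker(gf)/\ker f \to \ker(hgf)/\ker f$ is injective and its image is the kernel of the map $\ker(hgf)/\ker f \to \ker(hg)/\ker g$ induced by $f$. -/
import Mathlib


open LinearMap Submodule Function

variable {R : Type*} [Ring R]

/-- The quotient `K ⧸ I` of a submodule `K` by (the part of) a submodule `I`. -/
noncomputable abbrev Hmod {X : Type*} [AddCommGroup X] [Module R X]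
    (K I : Submodule R X) : Type _ :=
  K ⧸ (I.comap K.subtype)

/-- The map `K ⧸ I → K' ⧸ I'` induced by a linear map `φ` carrying `K` into `K'`
and `I` into `I'`. -/
noncomputable def Hmap {X Y : Type*} [AddCommGroup X] [Module R X]
    [AddCommGroup Y] [Module R Y] (K I : Submodule R X) (K' I' : Submodule R Y)
    (φ : X →ₗ[R] Y) (h1 : ∀ x ∈ K, φ x ∈ K') (h2 : ∀ x ∈ I, φ x ∈ I') :
    Hmod K I →ₗ[R] Hmod K' I' :=
  Submodule.mapQ _ _ (φ.restrict h1) (fun x hx => by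
    simpa [LinearMap.restrict_apply] using h2 x hx)

/-- For `f : A → B`, `g : B → C`, `h : C → D` there is an exact sequence
`0 → ker (gf)/ker f → ker (hgf)/ker f → ker (hg)/ker g`, the first map being
induced by the identity of `A` and the second by `f`. -/
theorem nested_kernels_exact {A B C D : Type*}
    [AddCommGroup A] [Module R A] [AddCommGroup B] [Module R B]
    [AddCommGroup C] [Module R C] [AddCommGroup D] [Module R D]
    (f : A →ₗ[R] B) (g : B →ₗ[R] C) (h : C →ₗ[R] D) :
    letI q1 : Hmod (ker (g ∘ₗ f)) (ker f) →ₗ[R] Hmod (ker (h ∘ₗ g ∘ₗ f)) (ker f) :=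
      Hmap _ _ _ _ LinearMap.id
        (fun x hx => by
          simp only [mem_ker, LinearMap.comp_apply, LinearMap.id_apply] at *
          rw [hx, map_zero])
        (fun x hx => hx)
    letI q2 : Hmod (ker (h ∘ₗ g ∘ₗ f)) (ker f) →ₗ[R] Hmod (ker (h ∘ₗ g)) (ker g) :=
      Hmap _ _ _ _ f
        (fun x hx => by simpa [mem_ker] using hx)
        (fun x hx => by
          simp only [mem_ker] at *
          rw [hx, map_zero])
    Injective q1 ∧ range q1 = ker q2 := by
  constructor
  · rw [← ker_eq_bot, eq_bot_iff]
    rintro x hx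
    obtain ⟨⟨a, ha⟩, rfl⟩ := Submodule.Quotient.mk_surjective _ x
    simp only [mem_ker, Hmap, Submodule.mapQ_apply] at hx
    rw [Submodule.Quotient.mk_eq_zero] at hx
    simp only [mem_bot]
    rw [Submodule.Quotient.mk_eq_zero]
    simpa [LinearMap.restrict_apply] using hx
  · ext x
    obtain ⟨⟨a, ha⟩, rfl⟩ := Submodule.Quotient.mk_surjective _ x
    simp only [mem_ker, Hmap, Submodule.mapQ_apply, Submodule.Quotient.mk_eq_zero,
      LinearMap.mem_range]
    constructor
    · rintro ⟨y, hy⟩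
      obtain ⟨⟨b, hb⟩, rfl⟩ := Submodule.Quotient.mk_surjective _ y
      simp only [Submodule.mapQ_apply] at hy
      rw [Submodule.Quotient.eq] at hy
      simp only [mem_comap, coe_subtype, AddSubgroupClass.coe_sub, subtype_apply,
        LinearMap.restrict_apply, LinearMap.id_apply, mem_ker, map_sub] at hy
      simp only [mem_ker, LinearMap.comp_apply] at hb
      have hfa : f a = f b := by
        have := sub_eq_zero.mp hy
        simpa using this.symm
      simp only [mem_comap, subtype_apply, LinearMap.restrict_apply, mem_ker]
      rw [hfa]; exact hb
    · intro hx
      simp only [mem_comap, subtype_apply, LinearMap.restrict_apply, mem_ker] at hx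
      have ha' : a ∈ ker (g ∘ₗ f) := by simpa [mem_ker] using hx
      exact ⟨Submodule.Quotient.mk ⟨a, ha'⟩, by simp [Submodule.mapQ_apply]; rfl⟩
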